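/- Let H be a commutative multiplicative hyperring of characteristic 2 and P a proper strong C-hyperideal of H. If rad(P) = P, then P is an sdf-absorbing hyperideal of H. -/

import Mathlib

open Pointwise

/-- A commutative multiplicative hyperring structure on an abelian group `H`. -/
structure MulHyperring (H : Type*) [AddCommGroup H] where
  hmul : H → H → Set H
  hmul_nonempty : ∀ x y : H, (hmul x y).Nonempty
  hmul_comm : ∀ x y : H, hmul x y = hmul y x
  hmul_assoc : ∀ x y z : H, (⋃ a ∈ hmul y z, hmul x a) = ⋃ b ∈ hmul x y, hmul b z
  hmul_distrib : ∀ x y z : H, hmul x (y + z) ⊆ hmul x y + hmul x z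
  hmul_neg : ∀ x y : H, hmul x (-y) = -(hmul x y)

namespace Hyper

variable {H : Type*} [AddCommGroup H] (mul : H → H → Set H)

/-- `P` is a hyperideal. -/
def IsIdeal (P : Set H) : Prop :=
  (0 : H) ∈ P ∧ (∀ x ∈ P, ∀ y ∈ P, x - y ∈ P) ∧ ∀ r : H, ∀ x ∈ P, mul r x ⊆ P

/-- Hyperproduct `a ∘ b₁ ∘ ⋯ ∘ bₙ`. -/
def hprod : H → List H → Set H
  | a, [] => {a}
  | a, b :: l => ⋃ t ∈ mul a b, hprod t l

/-- `C` is a finite hyperproduct `c₁ ∘ ⋯ ∘ cₙ`. -/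
def IsProduct (C : Set H) : Prop := ∃ (a : H) (l : List H), C = hprod mul a l

/-- `D` is a finite (nonempty) sum of finite hyperproducts. -/
def IsSum (D : Set H) : Prop :=
  ∃ L : List (Set H), L ≠ [] ∧ (∀ C ∈ L, IsProduct mul C) ∧ D = L.sum

/-- `P` is a `𝒞`-hyperideal. -/
def IsCIdeal (P : Set H) : Prop :=
  IsIdeal mul P ∧ ∀ C : Set H, IsProduct mul C → (C ∩ P).Nonempty → C ⊆ P

/-- `P` is a strong `𝒞`-hyperideal. -/
def IsStrongCIdeal (P : Set H) : Prop :=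
  IsIdeal mul P ∧ ∀ D : Set H, IsSum mul D → (D ∩ P).Nonempty → D ⊆ P

/-- The hypersquare `x² = x ∘ x`. -/
def sq (x : H) : Set H := mul x x

/-- `P` is an sdf-absorbing hyperideal. -/
def IsSdf (P : Set H) : Prop :=
  IsIdeal mul P ∧ P ≠ Set.univ ∧
    ∀ x y : H, x ≠ 0 → y ≠ 0 → sq mul x - sq mul y ⊆ P → x - y ∈ P ∨ x + y ∈ P

/-- `P` is a weakly sdf-absorbing hyperideal. -/
def IsWeaklySdf (P : Set H) : Prop :=
  IsIdeal mul P ∧ P ≠ Set.univ ∧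
    ∀ x y : H, x ≠ 0 → y ≠ 0 → (0 : H) ∉ sq mul x - sq mul y →
      sq mul x - sq mul y ⊆ P → x - y ∈ P ∨ x + y ∈ P

/-- `P` is a prime hyperideal. -/
def IsPrime (P : Set H) : Prop :=
  IsIdeal mul P ∧ P ≠ Set.univ ∧ ∀ x y : H, mul x y ⊆ P → x ∈ P ∨ y ∈ P

/-- The radical: intersection of the prime hyperideals containing `P`. -/
def rad (P : Set H) : Set H := ⋂₀ {Q : Set H | IsPrime mul Q ∧ P ⊆ Q}

/-- `hpow mul x n` is the hyperpower `x^(n+1)`. -/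
def hpow (x : H) (n : ℕ) : Set H := hprod mul x (List.replicate n x)

/-- `x` is nilpotent: `0 ∈ xⁿ` for some `n`. -/
def IsNilpotent (x : H) : Prop := ∃ n : ℕ, (0 : H) ∈ hpow mul x n

/-- `x` is a regular element: `x ∈ x² ∘ y` for some `y`. -/
def IsRegularElem (x : H) : Prop := ∃ y : H, x ∈ ⋃ t ∈ sq mul x, mul t y

/-- The hyperideal generated by a set `S`. -/
def span (S : Set H) : Set H := ⋂₀ {Q : Set H | IsIdeal mul Q ∧ S ⊆ Q}

/-- `P` is a maximal hyperideal. -/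
def IsMaximal (P : Set H) : Prop :=
  IsIdeal mul P ∧ P ≠ Set.univ ∧
    ∀ B : Set H, IsIdeal mul B → P ⊆ B → B = P ∨ B = Set.univ

end Hyper

/-- Componentwise hypermultiplication on a product. -/
def prodMul {H₁ H₂ : Type*} (m₁ : H₁ → H₁ → Set H₁) (m₂ : H₂ → H₂ → Set H₂) :
    H₁ × H₂ → H₁ × H₂ → Set (H₁ × H₂) :=
  fun a b => (m₁ a.1 b.1) ×ˢ (m₂ a.2 b.2)

/-- in characteristic 2, a proper strong `𝒞`-hyperideal equal to its radical
is sdf-absorbing. -/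
lemma hprod_single {H : Type*} (mul : H → H → Set H) (a b : H) :
    Hyper.hprod mul a [b] = mul a b := by
  simp [Hyper.hprod]

theorem stmt1 {H : Type*} [AddCommGroup H] (M : MulHyperring H)
    (hchar : ∀ x : H, x + x = 0) (P : Set H)
    (hS : Hyper.IsStrongCIdeal M.hmul P) (hproper : P ≠ Set.univ)
    (hrad : Hyper.rad M.hmul P = P) :
    Hyper.IsSdf M.hmul P := by
  obtain ⟨hI, hstrong⟩ := hS
  refine ⟨hI, hproper, ?_⟩
  intro x y hx hy hsub
  right
  have hneg : ∀ a : H, -a = a := fun a => neg_eq_of_add_eq_zero_left (hchar a)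
  -- pick elements
  obtain ⟨a, ha⟩ := M.hmul_nonempty x x
  obtain ⟨b, hb⟩ := M.hmul_nonempty y y
  obtain ⟨c, hc⟩ := M.hmul_nonempty x y
  -- a - b ∈ P
  have hab : a - b ∈ P := hsub ⟨a, ha, b, hb, rfl⟩
  -- define D
  set A : Set H := M.hmul x x with hA
  set B : Set H := M.hmul y y with hB
  set C : Set H := M.hmul x y with hC
  set D : Set H := A + (B + (C + (C + 0))) with hD
  have hDsum : Hyper.IsSum M.hmul D := by
    refine ⟨[A, B, C, C], by simp, ?_, by simp [hD]⟩
    intro E hE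
    simp only [List.mem_cons, List.mem_singleton, List.not_mem_nil, or_false] at hE
    rcases hE with h | h | h | h
    · exact ⟨x, [x], by rw [h, hprod_single]⟩
    · exact ⟨y, [y], by rw [h, hprod_single]⟩
    · exact ⟨x, [y], by rw [h, hprod_single]⟩
    · exact ⟨x, [y], by rw [h, hprod_single]⟩
  have hmemD : a - b ∈ D := by
    refine ⟨a, ha, b + (c + (c + 0)), ⟨b, hb, c + (c + 0), ⟨c, hc, c + 0, ⟨c, hc, 0, rfl, rfl⟩, rfl⟩, rfl⟩, ?_⟩
    rw [add_zero, hchar c, add_zero, sub_eq_add_neg, hneg]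
  have hDP : D ⊆ P := hstrong D hDsum ⟨a - b, hmemD, hab⟩
  -- (x+y)² ⊆ D
  have hsq : M.hmul (x + y) (x + y) ⊆ D := by
    intro t ht
    have h1 : M.hmul (x + y) (x + y) ⊆ M.hmul (x + y) x + M.hmul (x + y) y :=
      M.hmul_distrib (x + y) x y
    obtain ⟨u, hu, v, hv, huv⟩ := h1 ht
    rw [M.hmul_comm] at hu hv
    obtain ⟨u1, hu1, u2, hu2, hu'⟩ := M.hmul_distrib x x y hu
    obtain ⟨v1, hv1, v2, hv2, hv'⟩ := M.hmul_distrib y x y hv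
    rw [M.hmul_comm] at hv1
    refine ⟨u1, hu1, v2 + (u2 + (v1 + 0)), ⟨v2, hv2, u2 + (v1 + 0), ⟨u2, hu2, v1 + 0, ⟨v1, hv1, 0, rfl, rfl⟩, rfl⟩, rfl⟩, ?_⟩
    rw [← huv, ← hu', ← hv']
    beta_reduce
    abel_nf
  -- x + y ∈ rad P = P
  have : x + y ∈ Hyper.rad M.hmul P := by
    intro Q hQ
    obtain ⟨⟨hQI, hQne, hQprime⟩, hPQ⟩ := hQ
    rcases hQprime (x + y) (x + y) (fun t ht => hPQ (hDP (hsq ht))) with h | h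
    · exact h
    · exact h
  rwa [hrad] at this
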